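/- Let I ⊂ R be an ideal in a Noetherian ring R. Then √I ⊆ √C(I), i.e. the radical of I is contained in the radical of the conductor of I. -/

import Mathlib

noncomputable section

universe u v

/-- The `R`-algebra map `φ : T = R[y_i : i ∈ ι] → R[t]` sending `y_i ↦ f i · t`. -/
def reesHom {R : Type u} [CommRing R] {ι : Type v} (f : ι → R) :
    MvPolynomial ι R →ₐ[R] Polynomial R :=
  MvPolynomial.aeval fun i => Polynomial.C (f i) * Polynomial.X

/-- `J`, the defining ideal of the Rees algebra of the ideal generated by `f`. -/
def reesJ {R : Type u} [CommRing R] {ι : Type v} (f : ι → R) :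
    Ideal (MvPolynomial ι R) :=
  RingHom.ker (reesHom f)

/-- `L`, the ideal of `T` generated by the linear relations `∑ aᵢ yᵢ` with `∑ aᵢ fᵢ = 0`. -/
def linRel {R : Type u} [CommRing R] {ι : Type v} (f : ι → R) :
    Ideal (MvPolynomial ι R) :=
  Ideal.span {p | ∃ a : ι →₀ R, (a.sum fun i r => r * f i) = 0 ∧
    p = a.sum fun i r => MvPolynomial.C r * MvPolynomial.X i}

/-- The conductor `C(I) = L :_R J = {r ∈ R : r J ⊆ L}`. -/
def conductorIdeal {R : Type u} [CommRing R] {ι : Type v} (f : ι → R) : Ideal R :=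
  Submodule.colon (Submodule.restrictScalars R (linRel f))
    (Submodule.restrictScalars R (reesJ f))

/-- The ideal generated by `f` is of linear type if `J = L`. -/
def IsLinearType {R : Type u} [CommRing R] {ι : Type v} (f : ι → R) : Prop :=
  reesJ f = linRel f

end


noncomputable section Aux

open MvPolynomial

variable {R : Type} [CommRing R] {ι : Type} (f : ι → R)

/-- The basic linear relations are in `linRel`. -/
lemma linRel_basic (i j : ι) :
    (C (f i) * X j - C (f j) * X i : MvPolynomial ι R) ∈ linRel f := by
  apply Ideal.subset_span
  refine ⟨Finsupp.single j (f i) - Finsupp.single i (f j), ?_, ?_⟩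
  · rw [Finsupp.sum_sub_index (fun k r s => sub_mul r s (f k)),
      Finsupp.sum_single_index (zero_mul (f j)), Finsupp.sum_single_index (zero_mul (f i))]
    ring
  · rw [Finsupp.sum_sub_index (fun k r s => by rw [map_sub, sub_mul]),
      Finsupp.sum_single_index (by simp), Finsupp.sum_single_index (by simp)]

lemma q_rel (i j : ι) :
    Ideal.Quotient.mk (linRel f) (C (f i) * X j) =
    Ideal.Quotient.mk (linRel f) (C (f j) * X i) :=
  Ideal.Quotient.eq.mpr (linRel_basic f i j)

/-- Monomial computation under the quotient by `linRel`. -/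
lemma key_monomial (i : ι) (d : ι →₀ ℕ) (c : R) :
    Ideal.Quotient.mk (linRel f) (C (f i) ^ (Finsupp.degree d) * monomial d c) =
    Ideal.Quotient.mk (linRel f)
      (C (c * ∏ j ∈ d.support, f j ^ d j) * X i ^ (Finsupp.degree d)) := by
  rw [monomial_eq]
  have h1 : (C (f i) ^ (Finsupp.degree d) : MvPolynomial ι R)
      = ∏ j ∈ d.support, C (f i) ^ d j := by
    rw [Finsupp.degree_apply, ← Finset.prod_pow_eq_pow_sum]
  have h2 : (X i ^ (Finsupp.degree d) : MvPolynomial ι R)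
      = ∏ j ∈ d.support, X i ^ d j := by
    rw [Finsupp.degree_apply, ← Finset.prod_pow_eq_pow_sum]
  rw [h1, h2, Finsupp.prod]
  rw [show (∏ j ∈ d.support, (C (f i) : MvPolynomial ι R) ^ d j) * (C c * ∏ j ∈ d.support, X j ^ d j)
      = C c * ∏ j ∈ d.support, (C (f i) * X j) ^ d j by
    simp_rw [mul_pow]
    rw [Finset.prod_mul_distrib]; ring]
  rw [show (C (c * ∏ j ∈ d.support, f j ^ d j) : MvPolynomial ι R) * ∏ j ∈ d.support, X i ^ d j
      = C c * ∏ j ∈ d.support, (C (f j) * X i) ^ d j by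
    rw [map_mul, map_prod]
    simp_rw [mul_pow, map_pow]
    rw [mul_assoc, ← Finset.prod_mul_distrib]]
  rw [map_mul, map_mul, map_prod, map_prod]
  congr 1
  apply Finset.prod_congr rfl
  intro j _
  rw [map_pow, map_pow, q_rel]

end Aux

section Aux2
open MvPolynomial

variable {R : Type} [CommRing R] {ι : Type} (f : ι → R)

lemma reesHom_monomial (d : ι →₀ ℕ) (c : R) :
    reesHom f (monomial d c) =
      Polynomial.C (c * ∏ j ∈ d.support, f j ^ d j) * Polynomial.X ^ (Finsupp.degree d) := by
  unfold reesHom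
  rw [aeval_monomial, Finsupp.prod]
  simp_rw [mul_pow, ← Polynomial.C_pow]
  rw [Finset.prod_mul_distrib, Finsupp.degree_apply, ← Finset.prod_pow_eq_pow_sum, Polynomial.algebraMap_eq]
  simp only [map_mul, map_prod]
  ring

/-- evaluation of homogeneous component of an element of the kernel vanishes -/
lemma eval_homogeneousComponent_ker {g : MvPolynomial ι R} (hg : g ∈ reesJ f) (n : ℕ) :
    eval f (homogeneousComponent n g) = 0 := by
  have hco : ∀ p : MvPolynomial ι R, ∀ n : ℕ,
      (reesHom f p).coeff n = eval f (homogeneousComponent n p) := by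
    intro p
    induction p using MvPolynomial.induction_on' with
    | monomial d c =>
      intro n
      rw [reesHom_monomial,
        homogeneousComponent_of_mem (isHomogeneous_monomial c rfl),
        Polynomial.coeff_C_mul, Polynomial.coeff_X_pow]
      split_ifs with h
      · subst h; simp [eval_monomial, Finsupp.prod]
      · simp
    | add p q hp hq =>
      intro n
      rw [map_add, Polynomial.coeff_add, map_add, map_add, hp, hq]
  have : reesHom f g = 0 := hg
  rw [← hco, this, Polynomial.coeff_zero]

end Aux2

section Aux3
open MvPolynomial

variable {R : Type} [CommRing R] {ι : Type} (f : ι → R)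

lemma key_component (i : ι) (n : ℕ) {g : MvPolynomial ι R} (hg : g ∈ reesJ f) :
    C (f i) ^ n * homogeneousComponent n g ∈ linRel f := by
  set p := homogeneousComponent n g with hpdef
  have hp : p.IsHomogeneous n := homogeneousComponent_isHomogeneous n g
  have h0 : eval f p = 0 := eval_homogeneousComponent_ker f hg n
  rw [← Ideal.Quotient.eq_zero_iff_mem]
  have hsplit : C (f i) ^ n * p
      = ∑ d ∈ p.support, C (f i) ^ n * monomial d (coeff d p) := by
    rw [← Finset.mul_sum, support_sum_monomial_coeff]
  rw [hsplit, map_sum]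
  have heach : ∀ d ∈ p.support,
      Ideal.Quotient.mk (linRel f) (C (f i) ^ n * monomial d (coeff d p))
      = Ideal.Quotient.mk (linRel f)
          (C ((coeff d p) * ∏ j ∈ d.support, f j ^ d j) * X i ^ n) := by
    intro d hd
    have hdeg : Finsupp.degree d = n := by
      rw [Finsupp.degree_eq_weight_one]
      exact hp (mem_support_iff.mp hd)
    rw [← hdeg]
    exact key_monomial f i d _
  rw [Finset.sum_congr rfl heach, ← map_sum]
  have hsum : (∑ d ∈ p.support,
      (C ((coeff d p) * ∏ j ∈ d.support, f j ^ d j) * X i ^ n : MvPolynomial ι R))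
      = C (eval f p) * X i ^ n := by
    rw [eval_eq, map_sum, Finset.sum_mul]
  rw [hsum, h0, map_zero, zero_mul, map_zero]

end Aux3


/-- `√I ⊆ √C(I)` for any ideal `I = (f₁,…,f_m)` of a Noetherian ring. -/
theorem stmt_3 {R : Type} [CommRing R] [IsNoetherianRing R] {m : ℕ}
    (f : Fin m → R) (I : Ideal R) (hI : I = Ideal.span (Set.range f)) :
    I.radical ≤ (conductorIdeal f).radical := by
  open MvPolynomial in
  have key : ∀ i, f i ∈ (conductorIdeal f).radical := by
    intro i
    obtain ⟨s, hs⟩ : (reesJ f).FG := IsNoetherian.noetherian _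
    set N := s.sup (fun g => g.totalDegree) with hN
    refine Ideal.mem_radical_iff.mpr ⟨N, ?_⟩
    have hJ : reesJ f ≤ Submodule.colon (linRel f)
        (Submodule.span (MvPolynomial (Fin m) R) {(C (f i) : MvPolynomial (Fin m) R) ^ N}) := by
      rw [← hs, Ideal.span_le]
      intro g hg
      rw [SetLike.mem_coe, Submodule.mem_colon_span_singleton, smul_eq_mul]
      have hgJ : g ∈ reesJ f := by rw [← hs]; exact Ideal.subset_span hg
      have hdeg : g.totalDegree ≤ N := Finset.le_sup hg
      have hrepr := sum_homogeneousComponent g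
      have heq : g * C (f i) ^ N
          = ∑ n ∈ Finset.range (g.totalDegree + 1),
              homogeneousComponent n g * C (f i) ^ N := by
        rw [← Finset.sum_mul, hrepr]
      rw [heq]
      apply Ideal.sum_mem
      intro n hn
      have hnN : n ≤ N :=
        le_trans (Nat.lt_succ_iff.mp (Finset.mem_range.mp hn)) hdeg
      have hre : homogeneousComponent n g * C (f i) ^ N
          = C (f i) ^ (N - n) * (C (f i) ^ n * homogeneousComponent n g) := by
        rw [← mul_assoc, ← pow_add, Nat.sub_add_cancel hnN]; ring
      rw [hre]
      exact Ideal.mul_mem_left _ _ (key_component f i n hgJ)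
    refine Submodule.mem_colon.mpr fun p hp => ?_
    have hp' : p ∈ reesJ f := hp
    have := Submodule.mem_colon_span_singleton.mp (hJ hp')
    rw [smul_eq_mul] at this
    show (f i ^ N) • p ∈ Submodule.restrictScalars R (linRel f)
    rw [Submodule.restrictScalars_mem, smul_eq_C_mul, map_pow]
    rwa [mul_comm] at this
  rw [hI]
  have h1 : Ideal.span (Set.range f) ≤ (conductorIdeal f).radical := by
    rw [Ideal.span_le]
    rintro _ ⟨i, rfl⟩
    exact key i
  calc (Ideal.span (Set.range f)).radical
      ≤ ((conductorIdeal f).radical).radical := Ideal.radical_mono h1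
    _ = (conductorIdeal f).radical := (conductorIdeal f).radical_idem
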